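/- Let α be real, q ∈ {1, −1}, and c > 0. Define φ : ℝ → ℂ by φ(x) = (x − i·c)^(1/2 − q·α) · exp(−(x − i·c)²/2) · ((1 − q·α) − (x − i·c)²), where z^w denotes the principal complex power. Then φ is twice differentiable and for every real x, −φ''(x) + ((x − i·c)² + (α² − 1/4)/(x − i·c)²)·φ(x) = (6 − 2·q·α)·φ(x). -/

import Mathlib

set_option maxHeartbeats 1000000

open Complex

/-- Derivative of the principal complex power along the shifted line `x - ic`. -/
lemma cpow_shift_hasDerivAt (s : ℂ) (c : ℝ) (hc : 0 < c) (x : ℝ) :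
    HasDerivAt (fun x : ℝ => ((x : ℂ) - Complex.I * (c : ℂ)) ^ s)
      (s * ((x : ℂ) - Complex.I * (c : ℂ)) ^ (s - 1)) x := by
  have h0 : ((x : ℂ) - Complex.I * (c : ℂ)) ∈ Complex.slitPlane := by
    rw [Complex.mem_slitPlane_iff]
    right
    simp only [Complex.sub_im, Complex.ofReal_im, Complex.mul_im, Complex.I_re,
      Complex.ofReal_re, Complex.I_im, Complex.ofReal_im, zero_mul, one_mul, zero_sub]
    intro h
    have : c = 0 := by linarith [neg_eq_zero.mp (by linarith : -(0 - 1 * c) = 0)]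
    exact absurd this (ne_of_gt hc)
  have h : HasDerivAt (fun z : ℂ => (z - Complex.I * (c : ℂ)) ^ s)
      (s * ((x : ℂ) - Complex.I * (c : ℂ)) ^ (s - 1) * 1) (x : ℂ) :=
    ((hasDerivAt_id ((x : ℂ))).sub_const (Complex.I * (c : ℂ))).cpow_const h0
  simpa using h.comp_ofReal

/-- For real `α`, `q ∈ {1, −1}`, `c > 0`, the function
`φ(x) = (x − ic)^(1/2 − qα) · exp(−(x − ic)²/2) · ((1 − qα) − (x − ic)²)` (principal
complex power) is twice differentiable and solves the PT-symmetric harmonic oscillator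
Schrödinger equation `−φ'' + ((x − ic)² + (α² − 1/4)/(x − ic)²) φ = (6 − 2qα) φ`. -/
theorem stmt_13 (α q c : ℝ) (hq : q = 1 ∨ q = -1) (hc : 0 < c)
    (φ : ℝ → ℂ)
    (hφ : ∀ x : ℝ, φ x =
      ((x : ℂ) - Complex.I * (c : ℂ)) ^ ((1 / 2 : ℂ) - (q : ℂ) * (α : ℂ)) *
        Complex.exp (-((x : ℂ) - Complex.I * (c : ℂ)) ^ 2 / 2) *
        ((1 - (q : ℂ) * (α : ℂ)) - ((x : ℂ) - Complex.I * (c : ℂ)) ^ 2)) :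
    ∃ φ' φ'' : ℝ → ℂ,
      (∀ x : ℝ, HasDerivAt φ (φ' x) x) ∧
      (∀ x : ℝ, HasDerivAt φ' (φ'' x) x) ∧
      (∀ x : ℝ,
        -φ'' x + (((x : ℂ) - Complex.I * (c : ℂ)) ^ 2 +
            ((α : ℂ) ^ 2 - 1 / 4) / ((x : ℂ) - Complex.I * (c : ℂ)) ^ 2) * φ x =
          (6 - 2 * (q : ℂ) * (α : ℂ)) * φ x) := by
  have hφ' : φ = fun x : ℝ =>
      ((x : ℂ) - Complex.I * (c : ℂ)) ^ ((1 / 2 : ℂ) - (q : ℂ) * (α : ℂ)) *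
        Complex.exp (-((x : ℂ) - Complex.I * (c : ℂ)) ^ 2 / 2) *
        ((1 - (q : ℂ) * (α : ℂ)) - ((x : ℂ) - Complex.I * (c : ℂ)) ^ 2) := funext hφ
  subst hφ'
  set w : ℂ := (1 / 2 : ℂ) - (q : ℂ) * (α : ℂ) with hw
  have hZ : ∀ x : ℝ, HasDerivAt (fun x : ℝ => (x : ℂ) - Complex.I * (c : ℂ)) 1 x := by
    intro x
    simpa using (Complex.ofRealCLM.hasDerivAt (x := x)).sub_const (Complex.I * (c : ℂ))
  have hZne : ∀ x : ℝ, ((x : ℂ) - Complex.I * (c : ℂ)) ≠ 0 := by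
    intro x h
    have him : ((x : ℂ) - Complex.I * (c : ℂ)).im = -c := by simp
    rw [h] at him
    simp at him
    linarith
  have hZsq : ∀ x : ℝ, HasDerivAt (fun x : ℝ => ((x : ℂ) - Complex.I * (c : ℂ)) ^ 2)
      (2 * ((x : ℂ) - Complex.I * (c : ℂ))) x := by
    intro x
    have h2 : HasDerivAt (fun x : ℝ => ((x : ℂ) - Complex.I * (c : ℂ)) *
        ((x : ℂ) - Complex.I * (c : ℂ))) (2 * ((x : ℂ) - Complex.I * (c : ℂ))) x := by
      have := (hZ x).fun_mul (hZ x)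
      exact this.congr_deriv (by ring)
    simpa [pow_two] using h2
  set Z : ℝ → ℂ := fun x : ℝ => (x : ℂ) - Complex.I * (c : ℂ) with hZdef
  set E : ℝ → ℂ := fun x : ℝ => Complex.exp (-(Z x) ^ 2 / 2) with hEdef
  set P : ℝ → ℂ := fun x : ℝ => (1 - (q : ℂ) * (α : ℂ)) - (Z x) ^ 2 with hPdef
  have hA : ∀ (s : ℂ) (x : ℝ), HasDerivAt (fun x : ℝ => Z x ^ s)
      (s * Z x ^ (s - 1)) x := fun s x => cpow_shift_hasDerivAt s c hc x
  have hE : ∀ x : ℝ, HasDerivAt E (-Z x * E x) x := by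
    intro x
    have h1 : HasDerivAt (fun x : ℝ => -(Z x) ^ 2 / 2) (-Z x) x := by
      have := ((hZsq x).fun_neg).div_const 2
      exact this.congr_deriv (by ring)
    have := h1.cexp
    convert this using 1
    simp only [hEdef]
    ring
  have hP : ∀ x : ℝ, HasDerivAt P (-2 * Z x) x := by
    intro x
    have := (hZsq x).const_sub (1 - (q : ℂ) * (α : ℂ))
    exact this.congr_deriv (by ring)
  have hnegZE : ∀ x : ℝ, HasDerivAt (fun x => -Z x * E x)
      (-1 * E x + -Z x * (-Z x * E x)) x := by
    intro x
    exact ((hZ x).neg).mul (hE x)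
  refine ⟨fun x =>
      (w * Z x ^ (w - 1) * E x + Z x ^ w * (-Z x * E x)) * P x
        + Z x ^ w * E x * (-2 * Z x),
    fun x =>
      ((w * ((w - 1) * Z x ^ (w - 1 - 1)) * E x + w * Z x ^ (w - 1) * (-Z x * E x)
          + (w * Z x ^ (w - 1) * (-Z x * E x)
            + Z x ^ w * (-1 * E x + -Z x * (-Z x * E x)))) * P x
        + (w * Z x ^ (w - 1) * E x + Z x ^ w * (-Z x * E x)) * (-2 * Z x))
      + ((w * Z x ^ (w - 1) * E x + Z x ^ w * (-Z x * E x)) * (-2 * Z x)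
          + Z x ^ w * E x * (-2 * 1)),
    ?_, ?_, ?_⟩
  · intro x
    exact ((hA w x).mul (hE x)).mul (hP x)
  · intro x
    have h1 : HasDerivAt (fun x => (w * Z x ^ (w - 1) * E x + Z x ^ w * (-Z x * E x)) * P x)
        ((w * ((w - 1) * Z x ^ (w - 1 - 1)) * E x + w * Z x ^ (w - 1) * (-Z x * E x)
            + (w * Z x ^ (w - 1) * (-Z x * E x)
              + Z x ^ w * (-1 * E x + -Z x * (-Z x * E x)))) * P x
          + (w * Z x ^ (w - 1) * E x + Z x ^ w * (-Z x * E x)) * (-2 * Z x)) x := by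
      exact ((((hA (w - 1) x).const_mul w).mul (hE x)).add
        ((hA w x).mul (hnegZE x))).mul (hP x)
    have h2 : HasDerivAt (fun x => Z x ^ w * E x * (-2 * Z x))
        ((w * Z x ^ (w - 1) * E x + Z x ^ w * (-Z x * E x)) * (-2 * Z x)
          + Z x ^ w * E x * (-2 * 1)) x := by
      exact (((hA w x).mul (hE x))).mul ((hZ x).const_mul (-2))
    exact h1.add h2
  · intro x
    simp only [hZdef, hEdef, hPdef]
    set z : ℂ := (x : ℂ) - Complex.I * (c : ℂ) with hz
    have hzne : z ≠ 0 := hZne x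
    have e1 : z ^ (w - 1) = z ^ (w - 1 - 1) * z := by
      conv_lhs => rw [show w - 1 = w - 1 - 1 + 1 by ring]
      rw [Complex.cpow_add _ _ hzne, Complex.cpow_one]
    have e2 : z ^ w = z ^ (w - 1 - 1) * z * z := by
      conv_lhs => rw [show w = w - 1 - 1 + 1 + 1 by ring]
      rw [Complex.cpow_add _ _ hzne, Complex.cpow_add _ _ hzne, Complex.cpow_one]
    rw [e1, e2]
    set B : ℂ := z ^ (w - 1 - 1) with hB
    set Ex : ℂ := Complex.exp (-z ^ 2 / 2) with hEx
    clear_value B Ex z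
    rw [hw]
    rcases hq with hq | hq <;> subst hq <;>
    · push_cast
      field_simp
      ring
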